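/- (Gram–Charlier swaption price formula.) For all reals ν, B, c, μ3, μ4, the Gram–Charlier price PS₁ := ν·B·∫_c^∞ (z − c) g₁(z) dz satisfies PS₁ = ν·B·(φ(c) − c·(1 − Φ(c))) + ν·B·φ(c)·( (μ3/6)·c + ((μ4 − 3)/24)·(c² − 1) ), i.e., it equals the Bachelier price plus an explicit skewness–kurtosis correction. -/

import Mathlib

open MeasureTheory Real Set

open Filter

/-- The standard normal density `φ(z) = (2π)^(−1/2) exp(−z²/2)`. -/
noncomputable def φ (z : ℝ) : ℝ := (Real.sqrt (2 * Real.pi))⁻¹ * Real.exp (-z ^ 2 / 2)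

lemma φ_pos (z : ℝ) : 0 < φ z := by
  unfold φ
  positivity

lemma continuous_φ : Continuous φ := by
  unfold φ
  fun_prop

lemma hasDerivAt_φ (z : ℝ) : HasDerivAt φ (-z * φ z) z := by
  have h1 : HasDerivAt (fun z : ℝ => -z ^ 2 / 2) (-z) z := by
    have := ((hasDerivAt_pow 2 z).neg.div_const 2)
    refine this.congr_deriv ?_
    push_cast
    ring
  have h2 := (h1.exp).const_mul (Real.sqrt (2 * Real.pi))⁻¹
  unfold φ
  refine h2.congr_deriv ?_
  ring

lemma hasDerivAt_mul_φ {p p' : ℝ → ℝ} (hp : ∀ z, HasDerivAt p (p' z) z) (z : ℝ) :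
    HasDerivAt (fun z => p z * φ z) ((p' z - z * p z) * φ z) z := by
  have := (hp z).mul (hasDerivAt_φ z)
  refine this.congr_deriv ?_
  ring

lemma iteratedDeriv_φ_one : iteratedDeriv 1 φ = fun z => -z * φ z := by
  funext z
  rw [iteratedDeriv_one]
  exact (hasDerivAt_φ z).deriv

lemma iteratedDeriv_φ_two : iteratedDeriv 2 φ = fun z => (z ^ 2 - 1) * φ z := by
  funext z
  rw [iteratedDeriv_succ, iteratedDeriv_φ_one]
  have hp : ∀ z : ℝ, HasDerivAt (fun z : ℝ => -z) (-1 : ℝ) z := fun z => (hasDerivAt_id z).neg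
  rw [(hasDerivAt_mul_φ hp z).deriv]
  ring

lemma iteratedDeriv_φ_three : iteratedDeriv 3 φ = fun z => (3 * z - z ^ 3) * φ z := by
  funext z
  rw [iteratedDeriv_succ, iteratedDeriv_φ_two]
  have hp : ∀ z : ℝ, HasDerivAt (fun z : ℝ => z ^ 2 - 1) (2 * z) z := fun z => by
    have := (hasDerivAt_pow 2 z).sub_const 1
    refine this.congr_deriv ?_
    push_cast; ring
  rw [(hasDerivAt_mul_φ hp z).deriv]
  ring

lemma iteratedDeriv_φ_four : iteratedDeriv 4 φ = fun z => (z ^ 4 - 6 * z ^ 2 + 3) * φ z := by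
  funext z
  rw [iteratedDeriv_succ, iteratedDeriv_φ_three]
  have hp : ∀ z : ℝ, HasDerivAt (fun z : ℝ => 3 * z - z ^ 3) (3 - 3 * z ^ 2) z := fun z => by
    have := ((hasDerivAt_id z).const_mul 3).sub (hasDerivAt_pow 3 z)
    refine this.congr_deriv ?_
    push_cast; ring
  rw [(hasDerivAt_mul_φ hp z).deriv]
  ring

/-- The standard normal cumulative distribution function `Φ(x) = ∫_{−∞}^x φ(y) dy`. -/
noncomputable def Φ (x : ℝ) : ℝ := ∫ y in Set.Iic x, φ y

/-- The Hermite polynomials defined by `H n z * φ z = φ⁽ⁿ⁾ z`. -/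
noncomputable def H (n : ℕ) (z : ℝ) : ℝ := iteratedDeriv n φ z / φ z

/-- The fourth-order Gram–Charlier density with skewness `μ3` and kurtosis `μ4`. -/
noncomputable def g₁ (μ3 μ4 z : ℝ) : ℝ :=
  φ z * (1 - μ3 / 6 * H 3 z + (μ4 - 3) / 24 * H 4 z)

lemma H_three (z : ℝ) : H 3 z = 3 * z - z ^ 3 := by
  rw [H, iteratedDeriv_φ_three]
  exact mul_div_cancel_right₀ _ (φ_pos z).ne'

lemma H_four (z : ℝ) : H 4 z = z ^ 4 - 6 * z ^ 2 + 3 := by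
  rw [H, iteratedDeriv_φ_four]
  exact mul_div_cancel_right₀ _ (φ_pos z).ne'

lemma integrable_pow_gauss (n : ℕ) :
    Integrable (fun x : ℝ => x ^ n * Real.exp (-(1 / 2 : ℝ) * x ^ 2)) := by
  have h := integrable_rpow_mul_exp_neg_mul_sq (b := (1/2 : ℝ)) (by norm_num)
    (s := (n : ℝ)) (lt_of_lt_of_le neg_one_lt_zero (Nat.cast_nonneg n))
  simpa [Real.rpow_natCast] using h

lemma integrable_pow_mul_φ (n : ℕ) : Integrable (fun z : ℝ => z ^ n * φ z) := by
  have : (fun z : ℝ => z ^ n * φ z) =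
      fun z : ℝ => (Real.sqrt (2 * Real.pi))⁻¹ * (z ^ n * Real.exp (-(1 / 2 : ℝ) * z ^ 2)) := by
    funext z
    rw [φ, show -z ^ 2 / 2 = -(1 / 2 : ℝ) * z ^ 2 by ring]
    ring
  rw [this]
  exact (integrable_pow_gauss n).const_mul _

lemma integrable_φ : Integrable φ := by
  simpa using integrable_pow_mul_φ 0

lemma tendsto_pow_mul_φ (n : ℕ) :
    Tendsto (fun z : ℝ => z ^ n * φ z) atTop (nhds 0) := by
  have hsq : Tendsto (fun z : ℝ => z ^ 2 / 2) atTop atTop :=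
    (tendsto_pow_atTop (two_ne_zero)).atTop_div_const (by norm_num)
  have h1 : Tendsto (fun z : ℝ => (z ^ 2 / 2) ^ n * Real.exp (-(z ^ 2 / 2))) atTop (nhds 0) :=
    (tendsto_pow_mul_exp_neg_atTop_nhds_zero n).comp hsq
  have h2 : Tendsto (fun z : ℝ => z ^ (2 * n) * φ z) atTop (nhds 0) := by
    have h3 := (h1.const_mul ((Real.sqrt (2 * Real.pi))⁻¹ * 2 ^ n))
    rw [mul_zero] at h3
    refine h3.congr fun z => ?_
    rw [φ, show -z ^ 2 / 2 = -(z ^ 2 / 2) by ring]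
    rw [pow_mul, show z ^ 2 = z ^ 2 / 2 * 2 by ring, mul_pow]
    ring
  refine squeeze_zero_norm' ?_ h2
  filter_upwards [eventually_ge_atTop (1 : ℝ)] with z hz
  have hz0 : (0 : ℝ) ≤ z := by linarith
  rw [Real.norm_eq_abs, abs_mul, abs_of_nonneg (pow_nonneg hz0 n),
    abs_of_nonneg (φ_pos z).le]
  exact mul_le_mul_of_nonneg_right (pow_le_pow_right₀ hz (by omega)) (φ_pos z).le

lemma integral_φ : ∫ z : ℝ, φ z = 1 := by
  have h : ∫ z : ℝ, φ z =
      (Real.sqrt (2 * Real.pi))⁻¹ * ∫ z : ℝ, Real.exp (-(1 / 2 : ℝ) * z ^ 2) := by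
    rw [← integral_const_mul]
    congr 1
    funext z
    rw [φ, show -z ^ 2 / 2 = -(1 / 2 : ℝ) * z ^ 2 by ring]
  rw [h, integral_gaussian, show Real.pi / (1 / 2) = 2 * Real.pi by ring]
  exact inv_mul_cancel₀ (Real.sqrt_ne_zero'.2 (by positivity))

lemma Φ_eq (x : ℝ) : Φ x = Φ 0 + ∫ t in (0 : ℝ)..x, φ t := by
  rw [← intervalIntegral.integral_Iic_sub_Iic integrable_φ.integrableOn integrable_φ.integrableOn]
  unfold Φ
  ring

lemma hasDerivAt_Φ (x : ℝ) : HasDerivAt Φ (φ x) x := by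
  have h : HasDerivAt (fun y => Φ 0 + ∫ t in (0 : ℝ)..y, φ t) (φ x) x := by
    refine HasDerivAt.const_add _ ?_
    exact intervalIntegral.integral_hasDerivAt_right
      (integrable_φ.intervalIntegrable)
      (continuous_φ.stronglyMeasurableAtFilter _ _)
      continuous_φ.continuousAt
  refine h.congr_of_eventuallyEq ?_
  filter_upwards with y using (Φ_eq y)

lemma tendsto_Φ : Tendsto Φ atTop (nhds 1) := by
  have h1 : Tendsto (fun x : ℝ => Φ 0 + ∫ t in (0 : ℝ)..x, φ t) atTop
      (nhds (Φ 0 + ∫ t in Ioi (0 : ℝ), φ t)) :=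
    (intervalIntegral_tendsto_integral_Ioi 0 integrable_φ.integrableOn tendsto_id).const_add _
  have h2 : Φ 0 + ∫ t in Ioi (0 : ℝ), φ t = 1 := by
    rw [← integral_φ]
    exact intervalIntegral.integral_Iic_add_Ioi integrable_φ.integrableOn integrable_φ.integrableOn
  rw [h2] at h1
  exact h1.congr fun x => (Φ_eq x).symm

/-- Gram–Charlier swaption price formula: the Gram–Charlier price equals the Bachelier
price plus an explicit skewness–kurtosis correction. -/
theorem gram_charlier_price (ν B c μ3 μ4 : ℝ) :
    ν * B * (∫ z in Set.Ioi c, (z - c) * g₁ μ3 μ4 z) =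
      ν * B * (φ c - c * (1 - Φ c)) +
        ν * B * φ c * (μ3 / 6 * c + (μ4 - 3) / 24 * (c ^ 2 - 1)) := by
  set k : ℝ := (μ4 - 3) / 24 with hk
  set b0 : ℝ := -1 - c * μ3 / 6 + k with hb0
  set b1 : ℝ := -3 * k * c with hb1
  set b2 : ℝ := μ3 / 6 * c + 2 * k with hb2
  set b3 : ℝ := -μ3 / 6 + k * c with hb3
  set b4 : ℝ := -k with hb4
  have hq : ∀ z : ℝ, HasDerivAt (fun z : ℝ => b0 + b1 * z + b2 * z ^ 2 + b3 * z ^ 3 + b4 * z ^ 4)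
      (b1 + 2 * b2 * z + 3 * b3 * z ^ 2 + 4 * b4 * z ^ 3) z := by
    intro z
    have h := ((((hasDerivAt_const z b0).add ((hasDerivAt_id z).const_mul b1)).add
      ((hasDerivAt_pow 2 z).const_mul b2)).add
      ((hasDerivAt_pow 3 z).const_mul b3)).add ((hasDerivAt_pow 4 z).const_mul b4)
    refine h.congr_deriv ?_
    push_cast
    ring
  have hG : ∀ z : ℝ, HasDerivAt
      (fun z : ℝ => (b0 + b1 * z + b2 * z ^ 2 + b3 * z ^ 3 + b4 * z ^ 4) * φ z - c * Φ z)
      ((z - c) * g₁ μ3 μ4 z) z := by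
    intro z
    have h := (hasDerivAt_mul_φ hq z).sub ((hasDerivAt_Φ z).const_mul c)
    refine h.congr_deriv ?_
    rw [g₁, H_three, H_four, hb0, hb1, hb2, hb3, hb4, hk]
    ring
  have hint : IntegrableOn (fun z : ℝ => (z - c) * g₁ μ3 μ4 z) (Ioi c) := by
    have heq : (fun z : ℝ => (z - c) * g₁ μ3 μ4 z) = fun z : ℝ =>
        (-c * (1 + 3 * k)) * (z ^ 0 * φ z) + (1 + 3 * k + c * μ3 / 2) * (z ^ 1 * φ z) +
        (-μ3 / 2 + 6 * k * c) * (z ^ 2 * φ z) + (-6 * k - c * μ3 / 6) * (z ^ 3 * φ z) +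
        (μ3 / 6 - k * c) * (z ^ 4 * φ z) + k * (z ^ 5 * φ z) := by
      funext z
      rw [g₁, H_three, H_four, hk]
      ring
    rw [heq]
    exact ((((((integrable_pow_mul_φ 0).const_mul _).add
      ((integrable_pow_mul_φ 1).const_mul _)).add
      ((integrable_pow_mul_φ 2).const_mul _)).add
      ((integrable_pow_mul_φ 3).const_mul _)).add
      ((integrable_pow_mul_φ 4).const_mul _)).add
      ((integrable_pow_mul_φ 5).const_mul _) |>.integrableOn
  have htend : Tendsto
      (fun z : ℝ => (b0 + b1 * z + b2 * z ^ 2 + b3 * z ^ 3 + b4 * z ^ 4) * φ z - c * Φ z)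
      atTop (nhds (0 - c * 1)) := by
    have hpoly : Tendsto
        (fun z : ℝ => (b0 + b1 * z + b2 * z ^ 2 + b3 * z ^ 3 + b4 * z ^ 4) * φ z)
        atTop (nhds 0) := by
      have T := (((((tendsto_pow_mul_φ 0).const_mul b0).add
        ((tendsto_pow_mul_φ 1).const_mul b1)).add
        ((tendsto_pow_mul_φ 2).const_mul b2)).add
        ((tendsto_pow_mul_φ 3).const_mul b3)).add
        ((tendsto_pow_mul_φ 4).const_mul b4)
      simp only [mul_zero, add_zero] at T
      refine T.congr fun z => ?_
      ring
    exact hpoly.sub (tendsto_Φ.const_mul c)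
  rw [integral_Ioi_of_hasDerivAt_of_tendsto' (fun x _ => hG x) hint htend]
  rw [hb0, hb1, hb2, hb3, hb4, hk]
  ring
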